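/- Consider the classical determinantal case: m×n grid, and let C ⊆ [1,m]×[1,n] be a maximal subset containing no diagonal chain of size u+1 (where 0 < u ≤ min(m,n)). Then C consists of the lattice points in the union of u vertex-disjoint lattice paths from (m-u+i, i) to (i, n-u+i) for i = 1,…,u, together with the two corner triangles { (i,j) : j ≤ i-(m-u) } and { (i,j) : i ≤ j-(n-u) }; in particular |C| = u(m-u) + u(n-u) + u². -/

import Mathlib

/-- A diagonal chain: a finite set of points in ℤ² that is strictly increasing
in both coordinates. -/
def IsDiagChain (D : Finset (ℤ × ℤ)) : Prop :=
  ∀ P ∈ D, ∀ Q ∈ D, P ≠ Q → (P.1 < Q.1 ∧ P.2 < Q.2) ∨ (Q.1 < P.1 ∧ Q.2 < P.2)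

/-- A lattice path in matrix coordinates: a nonempty list of points in ℤ² where
consecutive points differ by an east step (0,1) or a north step (-1,0). -/
def IsLatticePath (P : List (ℤ × ℤ)) : Prop :=
  P ≠ [] ∧ P.Chain' (fun A B => B = (A.1, A.2 + 1) ∨ B = (A.1 - 1, A.2))

namespace S9
open Finset
attribute [local instance] Classical.propDecidable

lemma diag_subset {D D' : Finset (ℤ×ℤ)} (h : D ⊆ D') (hD : IsDiagChain D') : IsDiagChain D :=
  fun P hP Q hQ hne => hD P (h hP) Q (h hQ) hne

noncomputable def cn (S : Finset (ℤ × ℤ)) : ℕ := (S.powerset.filter IsDiagChain).sup Finset.card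

lemma le_cn {D S : Finset (ℤ×ℤ)} (hDS : D ⊆ S) (hD : IsDiagChain D) : D.card ≤ cn S :=
  Finset.le_sup (by simp only [Finset.mem_filter, Finset.mem_powerset]; exact ⟨hDS, hD⟩)

lemma cn_spec (S : Finset (ℤ×ℤ)) : ∃ D, D ⊆ S ∧ IsDiagChain D ∧ D.card = cn S := by
  obtain ⟨D, hD, hcard⟩ := Finset.exists_mem_eq_sup (S.powerset.filter IsDiagChain)
    ⟨∅, by simp [IsDiagChain]⟩ Finset.card
  rw [Finset.mem_filter, Finset.mem_powerset] at hD
  exact ⟨D, hD.1, hD.2, hcard.symm⟩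

lemma cn_mono {S T : Finset (ℤ×ℤ)} (h : S ⊆ T) : cn S ≤ cn T := by
  obtain ⟨D, h1, h2, h3⟩ := cn_spec S
  rw [← h3]; exact le_cn (h1.trans h) h2

/-- union of a chain entirely below another chain -/
lemma chain_union {A B : Finset (ℤ×ℤ)} (hA : IsDiagChain A) (hB : IsDiagChain B)
    (h : ∀ P ∈ A, ∀ Q ∈ B, P.1 < Q.1 ∧ P.2 < Q.2) :
    IsDiagChain (A ∪ B) ∧ (A ∪ B).card = A.card + B.card := by
  constructor
  · intro P hP Q hQ hne
    rcases Finset.mem_union.mp hP with hP | hP <;> rcases Finset.mem_union.mp hQ with hQ | hQ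
    · exact hA P hP Q hQ hne
    · exact Or.inl (h P hP Q hQ)
    · exact Or.inr (h Q hQ P hP)
    · exact hB P hP Q hQ hne
  · refine Finset.card_union_of_disjoint (Finset.disjoint_left.mpr ?_)
    intro x hx hx'
    exact absurd (h x hx x hx').1 (lt_irrefl _)

/-- a chain has a maximum element -/
lemma chain_max {D : Finset (ℤ×ℤ)} (hD : IsDiagChain D) (hne : D.Nonempty) :
    ∃ T ∈ D, ∀ Q ∈ D, Q ≠ T → Q.1 < T.1 ∧ Q.2 < T.2 := by
  obtain ⟨T, hT, hmax⟩ := Finset.exists_max_image D (fun P => P.1) hne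
  refine ⟨T, hT, fun Q hQ hne' => ?_⟩
  rcases hD Q hQ T hT hne' with h | h
  · exact h
  · exact absurd (hmax Q hQ) (not_le.mpr h.1)

lemma card_le_snd {D : Finset (ℤ×ℤ)} (hD : IsDiagChain D) (lo hi : ℤ)
    (h : ∀ Q ∈ D, lo ≤ Q.2 ∧ Q.2 ≤ hi) : D.card ≤ (hi + 1 - lo).toNat := by
  have hinj : Set.InjOn Prod.snd (D : Set (ℤ × ℤ)) := by
    intro x hx y hy hxy
    by_contra hne
    rcases hD x hx y hy hne with h' | h' <;> omega
  calc D.card = (D.image Prod.snd).card := (Finset.card_image_of_injOn hinj).symm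
    _ ≤ (Finset.Icc lo hi).card := Finset.card_le_card (by
        intro x hx
        obtain ⟨y, hy, rfl⟩ := Finset.mem_image.mp hx
        exact Finset.mem_Icc.mpr (h y hy))
    _ = (hi + 1 - lo).toNat := Int.card_Icc lo hi

lemma card_le_fst {D : Finset (ℤ×ℤ)} (hD : IsDiagChain D) (lo hi : ℤ)
    (h : ∀ Q ∈ D, lo ≤ Q.1 ∧ Q.1 ≤ hi) : D.card ≤ (hi + 1 - lo).toNat := by
  have hinj : Set.InjOn Prod.fst (D : Set (ℤ × ℤ)) := by
    intro x hx y hy hxy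
    by_contra hne
    rcases hD x hx y hy hne with h' | h' <;> omega
  calc D.card = (D.image Prod.fst).card := (Finset.card_image_of_injOn hinj).symm
    _ ≤ (Finset.Icc lo hi).card := Finset.card_le_card (by
        intro x hx
        obtain ⟨y, hy, rfl⟩ := Finset.mem_image.mp hx
        exact Finset.mem_Icc.mpr (h y hy))
    _ = (hi + 1 - lo).toNat := Int.card_Icc lo hi


noncomputable def al (C : Finset (ℤ×ℤ)) (P : ℤ×ℤ) : ℕ :=
  cn (C.filter fun Q => Q.1 < P.1 ∧ Q.2 < P.2)
noncomputable def be (C : Finset (ℤ×ℤ)) (P : ℤ×ℤ) : ℕ :=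
  cn (C.filter fun Q => P.1 < Q.1 ∧ P.2 < Q.2)

lemma le_al {C : Finset (ℤ×ℤ)} {P : ℤ×ℤ} {D : Finset (ℤ×ℤ)} (hDC : D ⊆ C)
    (hD : IsDiagChain D) (h : ∀ Q ∈ D, Q.1 < P.1 ∧ Q.2 < P.2) : D.card ≤ al C P :=
  le_cn (fun x hx => Finset.mem_filter.mpr ⟨hDC hx, h x hx⟩) hD

lemma le_be {C : Finset (ℤ×ℤ)} {P : ℤ×ℤ} {D : Finset (ℤ×ℤ)} (hDC : D ⊆ C)
    (hD : IsDiagChain D) (h : ∀ Q ∈ D, P.1 < Q.1 ∧ P.2 < Q.2) : D.card ≤ be C P :=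
  le_cn (fun x hx => Finset.mem_filter.mpr ⟨hDC hx, h x hx⟩) hD

lemma al_spec (C : Finset (ℤ×ℤ)) (P : ℤ×ℤ) : ∃ D, D ⊆ C ∧ IsDiagChain D ∧
    D.card = al C P ∧ ∀ Q ∈ D, Q.1 < P.1 ∧ Q.2 < P.2 := by
  obtain ⟨D, h1, h2, h3⟩ := cn_spec (C.filter fun Q => Q.1 < P.1 ∧ Q.2 < P.2)
  exact ⟨D, fun x hx => (Finset.mem_filter.mp (h1 hx)).1, h2, h3,
    fun Q hQ => (Finset.mem_filter.mp (h1 hQ)).2⟩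

lemma be_spec (C : Finset (ℤ×ℤ)) (P : ℤ×ℤ) : ∃ D, D ⊆ C ∧ IsDiagChain D ∧
    D.card = be C P ∧ ∀ Q ∈ D, P.1 < Q.1 ∧ P.2 < Q.2 := by
  obtain ⟨D, h1, h2, h3⟩ := cn_spec (C.filter fun Q => P.1 < Q.1 ∧ P.2 < Q.2)
  exact ⟨D, fun x hx => (Finset.mem_filter.mp (h1 hx)).1, h2, h3,
    fun Q hQ => (Finset.mem_filter.mp (h1 hQ)).2⟩

lemma al_mono {C : Finset (ℤ×ℤ)} {P P' : ℤ×ℤ} (h1 : P.1 ≤ P'.1) (h2 : P.2 ≤ P'.2) :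
    al C P ≤ al C P' := by
  apply cn_mono
  intro x hx
  rw [Finset.mem_filter] at hx ⊢
  exact ⟨hx.1, by omega⟩

lemma be_mono {C : Finset (ℤ×ℤ)} {P P' : ℤ×ℤ} (h1 : P'.1 ≤ P.1) (h2 : P'.2 ≤ P.2) :
    be C P ≤ be C P' := by
  apply cn_mono
  intro x hx
  rw [Finset.mem_filter] at hx ⊢
  exact ⟨hx.1, by omega⟩

lemma al_step {C : Finset (ℤ×ℤ)} {P P' : ℤ×ℤ} (h1 : P'.1 ≤ P.1 + 1) (h2 : P'.2 ≤ P.2 + 1) :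
    al C P' ≤ al C P + 1 := by
  obtain ⟨D, hDC, hD, hcard, hsw⟩ := al_spec C P'
  rcases D.eq_empty_or_nonempty with rfl | hne
  · simp at hcard; omega
  obtain ⟨T, hT, hTmax⟩ := chain_max hD hne
  have herase : D.erase T ⊆ C.filter fun Q => Q.1 < P.1 ∧ Q.2 < P.2 := by
    intro x hx
    obtain ⟨hxT, hxD⟩ := Finset.mem_erase.mp hx
    refine Finset.mem_filter.mpr ⟨hDC hxD, ?_⟩
    have h3 := hTmax x hxD hxT
    have h4 := hsw T hT
    omega
  have := le_cn herase (diag_subset (Finset.erase_subset _ _) hD)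
  have hc := Finset.card_erase_of_mem hT
  rw [← hcard]
  have : D.card - 1 ≤ al C P := by rw [← hc]; exact this
  have hpos : 1 ≤ D.card := Finset.card_pos.mpr hne
  omega

lemma be_step {C : Finset (ℤ×ℤ)} {P P' : ℤ×ℤ} (h1 : P.1 - 1 ≤ P'.1) (h2 : P.2 - 1 ≤ P'.2) :
    be C P' ≤ be C P + 1 := by
  obtain ⟨D, hDC, hD, hcard, hsw⟩ := be_spec C P'
  rcases D.eq_empty_or_nonempty with rfl | hne
  · simp at hcard; omega
  -- min element
  obtain ⟨T, hT, hTmax⟩ : ∃ T ∈ D, ∀ Q ∈ D, Q ≠ T → T.1 < Q.1 ∧ T.2 < Q.2 := by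
    obtain ⟨T, hT, hmin⟩ := Finset.exists_min_image D (fun P => P.1) hne
    refine ⟨T, hT, fun Q hQ hne' => ?_⟩
    rcases hD Q hQ T hT hne' with h | h
    · exact absurd (hmin Q hQ) (not_le.mpr h.1)
    · exact h
  have herase : D.erase T ⊆ C.filter fun Q => P.1 < Q.1 ∧ P.2 < Q.2 := by
    intro x hx
    obtain ⟨hxT, hxD⟩ := Finset.mem_erase.mp hx
    refine Finset.mem_filter.mpr ⟨hDC hxD, ?_⟩
    have h3 := hTmax x hxD hxT
    have h4 := hsw T hT
    omega
  have := le_cn herase (diag_subset (Finset.erase_subset _ _) hD)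
  have hc := Finset.card_erase_of_mem hT
  rw [← hcard]
  have : D.card - 1 ≤ be C P := by rw [← hc]; exact this
  have hpos : 1 ≤ D.card := Finset.card_pos.mpr hne
  omega

lemma al_gt {C : Finset (ℤ×ℤ)} {P Q : ℤ×ℤ} (hP : P ∈ C) (h1 : P.1 < Q.1) (h2 : P.2 < Q.2) :
    al C P + 1 ≤ al C Q := by
  obtain ⟨D, hDC, hD, hcard, hsw⟩ := al_spec C P
  have hPD : P ∉ D := fun h => absurd (hsw P h).1 (lt_irrefl _)
  have hu := chain_union hD (show IsDiagChain {P} by intro a ha b hb hab; simp at ha hb; simp [ha, hb] at hab)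
    (by intro x hx y hy; simp at hy; subst hy; exact hsw x hx)
  have hsub : D ∪ {P} ⊆ C := Finset.union_subset hDC (by simpa using hP)
  have := le_al (P := Q) hsub hu.1 (by
    intro x hx
    rcases Finset.mem_union.mp hx with hx | hx
    · have := hsw x hx; omega
    · simp at hx; subst hx; exact ⟨h1, h2⟩)
  rw [hu.2, Finset.card_singleton, hcard] at this
  exact this

lemma be_gt {C : Finset (ℤ×ℤ)} {P Q : ℤ×ℤ} (hQ : Q ∈ C) (h1 : P.1 < Q.1) (h2 : P.2 < Q.2) :
    be C Q + 1 ≤ be C P := by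
  obtain ⟨D, hDC, hD, hcard, hsw⟩ := be_spec C Q
  have hu := chain_union (show IsDiagChain {Q} by intro a ha b hb hab; simp at ha hb; simp [ha, hb] at hab) hD
    (by intro x hx y hy; simp at hx; subst hx; exact hsw y hy)
  have hsub : {Q} ∪ D ⊆ C := Finset.union_subset (by simpa using hQ) hDC
  have := le_be (P := P) hsub hu.1 (by
    intro x hx
    rcases Finset.mem_union.mp hx with hx | hx
    · simp at hx; subst hx; exact ⟨h1, h2⟩
    · have := hsw x hx; omega)
  rw [hu.2, Finset.card_singleton, hcard] at this
  omega

structure Good (m n u : ℕ) (C : Finset (ℤ × ℤ)) : Prop where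
  hu : 0 < u
  hum : u ≤ m
  hun : u ≤ n
  hC : ∀ P ∈ C, 1 ≤ P.1 ∧ P.1 ≤ (m : ℤ) ∧ 1 ≤ P.2 ∧ P.2 ≤ (n : ℤ)
  hchain : ∀ D : Finset (ℤ × ℤ), D ⊆ C → IsDiagChain D → D.card ≤ u
  hmax : ∀ P : ℤ × ℤ, 1 ≤ P.1 → P.1 ≤ (m : ℤ) → 1 ≤ P.2 → P.2 ≤ (n : ℤ) → P ∉ C →
      ∃ D : Finset (ℤ × ℤ), D ⊆ insert P C ∧ IsDiagChain D ∧ D.card = u + 1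

variable {m n u : ℕ} {C : Finset (ℤ × ℤ)}

lemma keyIn (h : Good m n u C) {P : ℤ×ℤ} (hP : P ∈ C) : al C P + be C P + 1 ≤ u := by
  obtain ⟨A, hAC, hA, hAcard, hAsw⟩ := al_spec C P
  obtain ⟨B, hBC, hB, hBcard, hBne⟩ := be_spec C P
  have hPB : IsDiagChain ({P} ∪ B) ∧ ({P} ∪ B).card = 1 + B.card := by
    have := chain_union (show IsDiagChain {P} by intro a ha b hb hab; simp at ha hb; simp [ha, hb] at hab) hB
      (by intro x hx y hy; simp at hx; subst hx; exact hBne y hy)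
    simpa using this
  have hu2 := chain_union hA hPB.1 (by
    intro x hx y hy
    rcases Finset.mem_union.mp hy with hy | hy
    · simp at hy; subst hy; exact hAsw x hx
    · have h1 := hAsw x hx; have h2 := hBne y hy; omega)
  have hsub : A ∪ ({P} ∪ B) ⊆ C :=
    Finset.union_subset hAC (Finset.union_subset (by simpa using hP) hBC)
  have := h.hchain _ hsub hu2.1
  rw [hu2.2, hPB.2, hAcard, hBcard] at this
  omega

lemma keyOut (h : Good m n u C) {P : ℤ×ℤ} (h1 : 1 ≤ P.1) (h2 : P.1 ≤ (m:ℤ))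
    (h3 : 1 ≤ P.2) (h4 : P.2 ≤ (n:ℤ)) (hP : P ∉ C) : u ≤ al C P + be C P := by
  obtain ⟨D, hD, hchainD, hcard⟩ := h.hmax P h1 h2 h3 h4 hP
  have hPD : P ∈ D := by
    by_contra hPD
    have hDC : D ⊆ C := fun x hx => by
      rcases Finset.mem_insert.mp (hD hx) with rfl | h'
      · exact absurd hx hPD
      · exact h'
    have := h.hchain D hDC hchainD
    omega
  set D1 := (D.erase P).filter (fun Q => Q.1 < P.1 ∧ Q.2 < P.2) with hD1
  set D2 := (D.erase P).filter (fun Q => P.1 < Q.1 ∧ P.2 < Q.2) with hD2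
  have hsplit : D.erase P = D1 ∪ D2 := by
    ext x
    simp only [hD1, hD2, Finset.mem_union, Finset.mem_filter, Finset.mem_erase, and_or_left]
    constructor
    · intro hx
      rcases hchainD x hx.2 P hPD hx.1 with h' | h'
      · exact Or.inl ⟨hx, h'⟩
      · exact Or.inr ⟨hx, h'⟩
    · rintro (hx | hx) <;> exact hx.1
  have hEC : D.erase P ⊆ C := by
    intro x hx
    obtain ⟨hxP, hxD⟩ := Finset.mem_erase.mp hx
    rcases Finset.mem_insert.mp (hD hxD) with rfl | h'
    · exact absurd rfl hxP
    · exact h'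
  have hle1 : D1.card ≤ al C P := le_al ((Finset.filter_subset _ _).trans hEC)
    (diag_subset ((Finset.filter_subset _ _).trans (Finset.erase_subset _ _)) hchainD)
    (fun Q hQ => (Finset.mem_filter.mp hQ).2)
  have hle2 : D2.card ≤ be C P := le_be ((Finset.filter_subset _ _).trans hEC)
    (diag_subset ((Finset.filter_subset _ _).trans (Finset.erase_subset _ _)) hchainD)
    (fun Q hQ => (Finset.mem_filter.mp hQ).2)
  have hdisj : Disjoint D1 D2 := by
    rw [Finset.disjoint_left]
    intro x hx hx'
    rw [hD1, Finset.mem_filter] at hx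
    rw [hD2, Finset.mem_filter] at hx'
    omega
  have hce : (D.erase P).card = u := by
    rw [Finset.card_erase_of_mem hPD, hcard]; omega
  have := Finset.card_union_of_disjoint hdisj
  rw [← hsplit, hce] at this
  omega

lemma al_le_snd' (h : Good m n u C) {a b : ℤ} (hb : 1 ≤ b) : (al C (a, b) : ℤ) ≤ b - 1 := by
  obtain ⟨D, hDC, hD, hcard, hsw⟩ := al_spec C (a, b)
  have := card_le_snd hD 1 (b-1) (fun Q hQ => ⟨(h.hC Q (hDC hQ)).2.2.1, by have := hsw Q hQ; simp at this; omega⟩)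
  omega

lemma al_le_fst' (h : Good m n u C) {a b : ℤ} (ha : 1 ≤ a) : (al C (a, b) : ℤ) ≤ a - 1 := by
  obtain ⟨D, hDC, hD, hcard, hsw⟩ := al_spec C (a, b)
  have := card_le_fst hD 1 (a-1) (fun Q hQ => ⟨(h.hC Q (hDC hQ)).1, by have := hsw Q hQ; simp at this; omega⟩)
  omega

lemma be_le_fst' (h : Good m n u C) {a b : ℤ} (ha : a ≤ (m:ℤ)) : (be C (a, b) : ℤ) ≤ (m:ℤ) - a := by
  obtain ⟨D, hDC, hD, hcard, hsw⟩ := be_spec C (a, b)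
  have := card_le_fst hD (a+1) m (fun Q hQ => ⟨by have := hsw Q hQ; simp at this; omega, (h.hC Q (hDC hQ)).2.1⟩)
  omega

lemma be_le_snd' (h : Good m n u C) {a b : ℤ} (hb : b ≤ (n:ℤ)) : (be C (a, b) : ℤ) ≤ (n:ℤ) - b := by
  obtain ⟨D, hDC, hD, hcard, hsw⟩ := be_spec C (a, b)
  have := card_le_snd hD (b+1) n (fun Q hQ => ⟨by have := hsw Q hQ; simp at this; omega, (h.hC Q (hDC hQ)).2.2.2⟩)
  omega
lemma diagmem1 (h : Good m n u C) {k : ℕ} (hk1 : 1 ≤ k) (hk2 : k ≤ u) :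
    ((m:ℤ)-u+k, (k:ℤ)) ∈ C := by
  by_contra hc
  have hum := h.hum; have hun := h.hun
  have h1 : (1:ℤ) ≤ (m:ℤ)-u+k := by omega
  have h2 : (m:ℤ)-u+k ≤ m := by omega
  have h3 : (1:ℤ) ≤ (k:ℤ) := by omega
  have h4 : (k:ℤ) ≤ n := by omega
  have hko := keyOut h h1 h2 h3 h4 hc
  have hb1 := al_le_snd' h (a := (m:ℤ)-u+k) h3
  have hb2 := be_le_fst' h (b := (k:ℤ)) h2
  omega

lemma diagmem2 (h : Good m n u C) {k : ℕ} (hk1 : 1 ≤ k) (hk2 : k ≤ u) :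
    ((k:ℤ), (n:ℤ)-u+k) ∈ C := by
  by_contra hc
  have hum := h.hum; have hun := h.hun
  have h1 : (1:ℤ) ≤ (k:ℤ) := by omega
  have h2 : (k:ℤ) ≤ m := by omega
  have h3 : (1:ℤ) ≤ (n:ℤ)-u+k := by omega
  have h4 : (n:ℤ)-u+k ≤ n := by omega
  have hko := keyOut h h1 h2 h3 h4 hc
  have hb1 := al_le_fst' h (b := (n:ℤ)-u+k) h1
  have hb2 := be_le_snd' h (a := (k:ℤ)) h4
  omega

private lemma diag_image_chain (f : ℕ → ℤ×ℤ) (hf : ∀ k l, k < l → (f k).1 < (f l).1 ∧ (f k).2 < (f l).2)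
    (s : Finset ℕ) : IsDiagChain (s.image f) ∧ (s.image f).card = s.card := by
  have hinj : Set.InjOn f (s : Set ℕ) := by
    intro x _ y _ hxy
    by_contra hne
    rcases Nat.lt_or_ge x y with h' | h'
    · have := hf x y h'; rw [hxy] at this; omega
    · have h'' : y < x := by omega
      have := hf y x h''; rw [hxy] at this; omega
  refine ⟨?_, Finset.card_image_of_injOn hinj⟩
  intro P hP Q hQ hne
  obtain ⟨p, hp, rfl⟩ := Finset.mem_image.mp hP
  obtain ⟨q, hq, rfl⟩ := Finset.mem_image.mp hQ
  have hpq : p ≠ q := fun hh => hne (by rw [hh])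
  rcases Nat.lt_or_ge p q with h' | h'
  · exact Or.inl (hf p q h')
  · exact Or.inr (hf q p (by omega))

lemma al_ge_diag1 (h : Good m n u C) {a b : ℤ} (K : ℕ) (hK : K ≤ u)
    (h1 : (K:ℤ) < b) (h2 : (m:ℤ)-(u:ℤ)+K < a) : K ≤ al C (a, b) := by
  set f : ℕ → ℤ×ℤ := fun l => ((m:ℤ)-u+l, (l:ℤ)) with hf
  have hmono : ∀ k l, k < l → (f k).1 < (f l).1 ∧ (f k).2 < (f l).2 := by
    intro k l hkl; simp [hf]; omega
  obtain ⟨hch, hcard⟩ := diag_image_chain f hmono (Finset.Icc 1 K)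
  have hsub : (Finset.Icc 1 K).image f ⊆ C := by
    intro x hx
    obtain ⟨l, hl, rfl⟩ := Finset.mem_image.mp hx
    rw [Finset.mem_Icc] at hl
    exact diagmem1 h hl.1 (hl.2.trans hK)
  have := le_al (P := (a,b)) hsub hch (by
    intro Q hQ
    obtain ⟨l, hl, rfl⟩ := Finset.mem_image.mp hQ
    rw [Finset.mem_Icc] at hl
    simp [hf]
    omega)
  rw [hcard, Nat.card_Icc] at this
  omega

lemma al_ge_diag2 (h : Good m n u C) {a b : ℤ} (K : ℕ) (hK : K ≤ u)
    (h1 : (K:ℤ) < a) (h2 : (n:ℤ)-(u:ℤ)+K < b) : K ≤ al C (a, b) := by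
  set f : ℕ → ℤ×ℤ := fun l => ((l:ℤ), (n:ℤ)-u+l) with hf
  have hmono : ∀ k l, k < l → (f k).1 < (f l).1 ∧ (f k).2 < (f l).2 := by
    intro k l hkl; simp [hf]; omega
  obtain ⟨hch, hcard⟩ := diag_image_chain f hmono (Finset.Icc 1 K)
  have hsub : (Finset.Icc 1 K).image f ⊆ C := by
    intro x hx
    obtain ⟨l, hl, rfl⟩ := Finset.mem_image.mp hx
    rw [Finset.mem_Icc] at hl
    exact diagmem2 h hl.1 (hl.2.trans hK)
  have := le_al (P := (a,b)) hsub hch (by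
    intro Q hQ
    obtain ⟨l, hl, rfl⟩ := Finset.mem_image.mp hQ
    rw [Finset.mem_Icc] at hl
    simp [hf]
    omega)
  rw [hcard, Nat.card_Icc] at this
  omega

lemma be_ge_diag1 (h : Good m n u C) {a b : ℤ} (K : ℕ) (hK : K ≤ u)
    (h1 : a ≤ (m:ℤ) - K) (h2 : b ≤ (u:ℤ) - K) : K ≤ be C (a, b) := by
  set f : ℕ → ℤ×ℤ := fun l => ((m:ℤ)-u+l, (l:ℤ)) with hf
  have hmono : ∀ k l, k < l → (f k).1 < (f l).1 ∧ (f k).2 < (f l).2 := by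
    intro k l hkl; simp [hf]; omega
  obtain ⟨hch, hcard⟩ := diag_image_chain f hmono (Finset.Icc (u-K+1) u)
  have hsub : (Finset.Icc (u-K+1) u).image f ⊆ C := by
    intro x hx
    obtain ⟨l, hl, rfl⟩ := Finset.mem_image.mp hx
    rw [Finset.mem_Icc] at hl
    exact diagmem1 h (by omega) hl.2
  have := le_be (P := (a,b)) hsub hch (by
    intro Q hQ
    obtain ⟨l, hl, rfl⟩ := Finset.mem_image.mp hQ
    rw [Finset.mem_Icc] at hl
    simp [hf]
    omega)
  rw [hcard, Nat.card_Icc] at this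
  omega

lemma be_ge_diag2 (h : Good m n u C) {a b : ℤ} (K : ℕ) (hK : K ≤ u)
    (h1 : a ≤ (u:ℤ) - K) (h2 : b ≤ (n:ℤ) - K) : K ≤ be C (a, b) := by
  set f : ℕ → ℤ×ℤ := fun l => ((l:ℤ), (n:ℤ)-u+l) with hf
  have hmono : ∀ k l, k < l → (f k).1 < (f l).1 ∧ (f k).2 < (f l).2 := by
    intro k l hkl; simp [hf]; omega
  obtain ⟨hch, hcard⟩ := diag_image_chain f hmono (Finset.Icc (u-K+1) u)
  have hsub : (Finset.Icc (u-K+1) u).image f ⊆ C := by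
    intro x hx
    obtain ⟨l, hl, rfl⟩ := Finset.mem_image.mp hx
    rw [Finset.mem_Icc] at hl
    exact diagmem2 h (by omega) hl.2
  have := le_be (P := (a,b)) hsub hch (by
    intro Q hQ
    obtain ⟨l, hl, rfl⟩ := Finset.mem_image.mp hQ
    rw [Finset.mem_Icc] at hl
    simp [hf]
    omega)
  rw [hcard, Nat.card_Icc] at this
  omega

lemma triangle1_mem (h : Good m n u C) {P : ℤ×ℤ} (h1 : 1 ≤ P.1) (h2 : P.1 ≤ (m:ℤ))
    (h3 : 1 ≤ P.2) (h4 : P.2 ≤ (n:ℤ)) (ht : P.2 ≤ P.1 - ((m:ℤ) - u)) : P ∈ C := by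
  by_contra hc
  have hko := keyOut h h1 h2 h3 h4 hc
  have hb1 : (al C P : ℤ) ≤ P.2 - 1 := by
    have := al_le_snd' h (a := P.1) h3; simpa using this
  have hb2 : (be C P : ℤ) ≤ (m:ℤ) - P.1 := by
    have := be_le_fst' h (b := P.2) h2; simpa using this
  omega

lemma triangle2_mem (h : Good m n u C) {P : ℤ×ℤ} (h1 : 1 ≤ P.1) (h2 : P.1 ≤ (m:ℤ))
    (h3 : 1 ≤ P.2) (h4 : P.2 ≤ (n:ℤ)) (ht : P.1 ≤ P.2 - ((n:ℤ) - u)) : P ∈ C := by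
  by_contra hc
  have hko := keyOut h h1 h2 h3 h4 hc
  have hb1 : (al C P : ℤ) ≤ P.1 - 1 := by
    have := al_le_fst' h (b := P.2) h1; simpa using this
  have hb2 : (be C P : ℤ) ≤ (n:ℤ) - P.2 := by
    have := be_le_snd' h (a := P.1) h4; simpa using this
  omega
lemma edge1 (h : Good m n u C) {P : ℤ×ℤ} (hP : P ∈ C) (ham : P.1 = (m:ℤ))
    (hs : al C P + be C P + 2 ≤ u) : P.2 ≤ P.1 - (m:ℤ) + u - 1 := by
  obtain ⟨h1, h2, h3, h4⟩ := h.hC P hP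
  set K : ℕ := min (u-1) (P.2-1).toNat with hKdef
  have hge : K ≤ al C P := by
    have := al_ge_diag1 h (a := P.1) (b := P.2) K (by omega) (by omega) (by omega)
    simpa using this
  omega

lemma edge2 (h : Good m n u C) {P : ℤ×ℤ} (hP : P ∈ C) (hbn : P.2 = (n:ℤ))
    (hs : al C P + be C P + 2 ≤ u) : P.1 ≤ P.2 - (n:ℤ) + u - 1 := by
  obtain ⟨h1, h2, h3, h4⟩ := h.hC P hP
  set K : ℕ := min (u-1) (P.1-1).toNat with hKdef
  have hge : K ≤ al C P := by
    have := al_ge_diag2 h (a := P.1) (b := P.2) K (by omega) (by omega) (by omega)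
    simpa using this
  omega

lemma nontight (h : Good m n u C) : ∀ N : ℕ, ∀ P ∈ C, ((m:ℤ) - P.1) + ((n:ℤ) - P.2) ≤ N →
    al C P + be C P + 2 ≤ u →
    P.2 ≤ P.1 - (m:ℤ) + u - 1 ∨ P.1 ≤ P.2 - (n:ℤ) + u - 1 := by
  intro N
  induction N with
  | zero =>
    intro P hP hm hs
    obtain ⟨h1, h2, h3, h4⟩ := h.hC P hP
    have ham : P.1 = (m:ℤ) := by omega
    exact Or.inl (edge1 h hP ham hs)
  | succ N ih =>
    intro P hP hm hs
    obtain ⟨h1, h2, h3, h4⟩ := h.hC P hP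
    by_cases ham : P.1 = (m:ℤ)
    · exact Or.inl (edge1 h hP ham hs)
    by_cases hbn : P.2 = (n:ℤ)
    · exact Or.inr (edge2 h hP hbn hs)
    set Q : ℤ×ℤ := (P.1+1, P.2+1) with hQdef
    have hQC : Q ∈ C := by
      by_contra hc
      have hko := keyOut h (P := Q) (by simp only [hQdef]; omega) (by simp only [hQdef]; omega)
        (by simp only [hQdef]; omega) (by simp only [hQdef]; omega) hc
      have hst : al C Q ≤ al C P + 1 := al_step (by simp only [hQdef]; omega) (by simp only [hQdef]; omega)
      have hbm : be C Q ≤ be C P := be_mono (by simp only [hQdef]; omega) (by simp only [hQdef]; omega)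
      omega
    have halQ : al C P + 1 ≤ al C Q := al_gt hP (by simp only [hQdef]; omega) (by simp only [hQdef]; omega)
    have halQ' : al C Q ≤ al C P + 1 := al_step (by simp only [hQdef]; omega) (by simp only [hQdef]; omega)
    have hbeQ : be C Q + 1 ≤ be C P := be_gt hQC (by simp only [hQdef]; omega) (by simp only [hQdef]; omega)
    have := ih Q hQC (by simp only [hQdef]; omega) (by omega)
    simp only [hQdef] at this
    omega

lemma tight (h : Good m n u C) {P : ℤ×ℤ} (hP : P ∈ C)
    (h1 : ¬ (P.2 ≤ P.1 - (m:ℤ) + u - 1)) (h2 : ¬ (P.1 ≤ P.2 - (n:ℤ) + u - 1)) :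
    al C P + be C P + 1 = u := by
  have hin := keyIn h hP
  by_contra hc
  have hs : al C P + be C P + 2 ≤ u := by omega
  obtain ⟨hm, _, _, _⟩ := h.hC P hP
  rcases nontight h (((m:ℤ) - P.1) + ((n:ℤ) - P.2)).toNat P hP (by omega) hs with h' | h'
  · exact h1 h'
  · exact h2 h'

/-- box bounds for a point with given rank data -/
lemma box (h : Good m n u C) {P : ℤ×ℤ} (hP : P ∈ C) {r : ℕ} (hr : al C P = r) :
    (r:ℤ) + 1 ≤ P.1 ∧ (r:ℤ) + 1 ≤ P.2 ∧
    P.1 ≤ (m:ℤ) - (be C P) ∧ P.2 ≤ (n:ℤ) - (be C P) := by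
  obtain ⟨h1, h2, h3, h4⟩ := h.hC P hP
  obtain ⟨A, hAC, hA, hAcard, hAsw⟩ := al_spec C P
  obtain ⟨B, hBC, hB, hBcard, hBne⟩ := be_spec C P
  have b1 := card_le_fst hA 1 (P.1 - 1) (fun Q hQ => ⟨(h.hC Q (hAC hQ)).1, by have := hAsw Q hQ; omega⟩)
  have b2 := card_le_snd hA 1 (P.2 - 1) (fun Q hQ => ⟨(h.hC Q (hAC hQ)).2.2.1, by have := hAsw Q hQ; omega⟩)
  have b3 := card_le_fst hB (P.1 + 1) m (fun Q hQ => ⟨by have := hBne Q hQ; omega, (h.hC Q (hBC hQ)).2.1⟩)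
  have b4 := card_le_snd hB (P.2 + 1) n (fun Q hQ => ⟨by have := hBne Q hQ; omega, (h.hC Q (hBC hQ)).2.2.2⟩)
  omega

/-- start point of path r -/
lemma startpt (h : Good m n u C) {r : ℕ} (hr : r + 1 ≤ u) :
    ((m:ℤ)-(u:ℤ)+r+1, (r:ℤ)+1) ∈ C ∧ al C ((m:ℤ)-(u:ℤ)+r+1, (r:ℤ)+1) = r ∧
      be C ((m:ℤ)-(u:ℤ)+r+1, (r:ℤ)+1) = u - 1 - r := by
  have hum := h.hum; have hun := h.hun
  set P : ℤ×ℤ := ((m:ℤ)-(u:ℤ)+r+1, (r:ℤ)+1) with hPdef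
  have hPC : P ∈ C := triangle1_mem h (by simp only [hPdef]; omega) (by simp only [hPdef]; omega)
    (by simp only [hPdef]; omega) (by simp only [hPdef]; omega) (by simp only [hPdef]; omega)
  have hle : (al C P : ℤ) ≤ r := by
    have := al_le_snd' h (a := P.1) (b := P.2) (by simp only [hPdef]; omega)
    simp only [hPdef] at this ⊢
    omega
  have hge : r ≤ al C P := by
    have := al_ge_diag1 h (a := P.1) (b := P.2) r (by omega) (by simp only [hPdef]; omega) (by simp only [hPdef]; omega)
    simp only [hPdef] at this ⊢; omega
  have hble : (be C P : ℤ) ≤ (u:ℤ) - 1 - r := by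
    have := be_le_fst' h (a := P.1) (b := P.2) (by simp only [hPdef]; omega)
    simp only [hPdef] at this ⊢
    omega
  have hbge : u - 1 - r ≤ be C P := by
    have := be_ge_diag1 h (a := P.1) (b := P.2) (u-1-r) (by omega) (by simp only [hPdef]; omega)
      (by simp only [hPdef]; omega)
    simp only [hPdef] at this ⊢; omega
  exact ⟨hPC, by omega, by omega⟩

/-- end point of path r -/
lemma endpt (h : Good m n u C) {r : ℕ} (hr : r + 1 ≤ u) :
    ((r:ℤ)+1, (n:ℤ)-(u:ℤ)+r+1) ∈ C ∧ al C ((r:ℤ)+1, (n:ℤ)-(u:ℤ)+r+1) = r ∧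
      be C ((r:ℤ)+1, (n:ℤ)-(u:ℤ)+r+1) = u - 1 - r := by
  have hum := h.hum; have hun := h.hun
  set P : ℤ×ℤ := ((r:ℤ)+1, (n:ℤ)-(u:ℤ)+r+1) with hPdef
  have hPC : P ∈ C := triangle2_mem h (by simp only [hPdef]; omega) (by simp only [hPdef]; omega)
    (by simp only [hPdef]; omega) (by simp only [hPdef]; omega) (by simp only [hPdef]; omega)
  have hle : (al C P : ℤ) ≤ r := by
    have := al_le_fst' h (a := P.1) (b := P.2) (by simp only [hPdef]; omega)
    simp only [hPdef] at this ⊢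
    omega
  have hge : r ≤ al C P := by
    have := al_ge_diag2 h (a := P.1) (b := P.2) r (by omega) (by simp only [hPdef]; omega) (by simp only [hPdef]; omega)
    simp only [hPdef] at this ⊢; omega
  have hble : (be C P : ℤ) ≤ (u:ℤ) - 1 - r := by
    have := be_le_snd' h (a := P.1) (b := P.2) (by simp only [hPdef]; omega)
    simp only [hPdef] at this ⊢
    omega
  have hbge : u - 1 - r ≤ be C P := by
    have := be_ge_diag2 h (a := P.1) (b := P.2) (u-1-r) (by omega) (by simp only [hPdef]; omega)
      (by simp only [hPdef]; omega)
    simp only [hPdef] at this ⊢; omega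
  exact ⟨hPC, by omega, by omega⟩
def HSet (C : Finset (ℤ×ℤ)) (u r : ℕ) (P : ℤ×ℤ) : Prop :=
  P ∈ C ∧ al C P = r ∧ be C P = u - 1 - r

lemma succ_lemma (h : Good m n u C) {r : ℕ} (hr : r + 1 ≤ u) {P : ℤ×ℤ}
    (hP : HSet C u r P) (hne : P ≠ ((r:ℤ)+1, (n:ℤ)-(u:ℤ)+r+1)) :
    HSet C u r (P.1, P.2+1) ∨ HSet C u r (P.1-1, P.2) := by
  obtain ⟨hPC, hal, hbe⟩ := hP
  obtain ⟨hg1, hg2, hg3, hg4⟩ := h.hC P hPC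
  obtain ⟨hb1, hb2, hb3, hb4⟩ := box h hPC hal
  rw [hbe] at hb3 hb4
  have hum := h.hum; have hun := h.hun; have hu := h.hu
  have hne' : ¬ (P.1 = (r:ℤ)+1 ∧ P.2 = (n:ℤ)-(u:ℤ)+r+1) := by
    intro hcc
    exact hne (Prod.ext_iff.mpr ⟨hcc.1, hcc.2⟩)
  have hstrict : P.2 - ((n:ℤ)-u) < P.1 := by
    by_contra hcc
    push_neg at hcc
    exact hne' ⟨by omega, by omega⟩
  -- the N-analysis: either N is in HSet, or there is a "big NE chain"
  have hNana : 2 ≤ P.1 →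
      HSet C u r (P.1-1, P.2) ∨ (∃ B : Finset (ℤ×ℤ), B ⊆ C ∧ IsDiagChain B ∧
        B.card = u - r ∧ ∀ Q ∈ B, P.1 ≤ Q.1 ∧ P.2 + 1 ≤ Q.2) := by
    intro ha2
    by_cases hNC : ((P.1-1, P.2) : ℤ×ℤ) ∈ C
    · have halN_le : al C (P.1-1, P.2) ≤ r := by
        rw [← hal]; exact al_mono (by simp; try omega) (by simp)
      have halN_ge : r ≤ al C (P.1-1, P.2) + 1 := by
        rw [← hal]; exact al_step (by simp) (by simp; try omega)
      have htN : al C (P.1-1, P.2) + be C (P.1-1, P.2) + 1 = u := by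
        apply tight h hNC
        · simp; try omega
        · simp; try omega
      by_cases halN : al C (P.1-1, P.2) = r
      · exact Or.inl ⟨hNC, halN, by omega⟩
      · have halN' : al C (P.1-1, P.2) = r - 1 ∧ 1 ≤ r := by omega
        have hbeN : be C (P.1-1, P.2) = u - r := by omega
        obtain ⟨B, hBC, hB, hBcard, hBne⟩ := be_spec C (P.1-1, P.2)
        refine Or.inr ⟨B, hBC, hB, by omega, ?_⟩
        intro Q hQ
        have := hBne Q hQ
        simp at this
        omega
    · have hko := keyOut h (P := (P.1-1, P.2)) (by simp; try omega) (by simp; try omega)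
        (by simp; try omega) (by simp; try omega) hNC
      have halN_le : al C (P.1-1, P.2) ≤ r := by
        rw [← hal]; exact al_mono (by simp; try omega) (by simp)
      obtain ⟨B, hBC, hB, hBcard, hBne⟩ := be_spec C (P.1-1, P.2)
      obtain ⟨B', hB'B, hB'card⟩ := Finset.exists_subset_card_eq (s := B) (n := u - r) (by omega)
      refine Or.inr ⟨B', hB'B.trans hBC, diag_subset hB'B hB, hB'card, ?_⟩
      intro Q hQ
      have := hBne Q (hB'B hQ)
      simp at this
      omega
  by_cases hEgrid : P.2 + 1 ≤ (n:ℤ)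
  · -- E in grid
    have hEana : HSet C u r (P.1, P.2+1) ∨ (∃ A : Finset (ℤ×ℤ), A ⊆ C ∧ IsDiagChain A ∧
        A.card = r + 1 ∧ ∀ Q ∈ A, Q.1 ≤ P.1 - 1 ∧ Q.2 ≤ P.2) := by
      by_cases hEC : ((P.1, P.2+1) : ℤ×ℤ) ∈ C
      · have halE_ge : r ≤ al C (P.1, P.2+1) := by
          rw [← hal]; exact al_mono (by simp) (by simp; try omega)
        have halE_le : al C (P.1, P.2+1) ≤ r + 1 := by
          rw [← hal]; exact al_step (by simp) (by simp)
        by_cases halE : al C (P.1, P.2+1) = r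
        · have htE : al C (P.1, P.2+1) + be C (P.1, P.2+1) + 1 = u := by
            apply tight h hEC
            · simp; try omega
            · simp; try omega
          exact Or.inl ⟨hEC, halE, by omega⟩
        · obtain ⟨A, hAC, hA, hAcard, hAsw⟩ := al_spec C (P.1, P.2+1)
          refine Or.inr ⟨A, hAC, hA, by omega, ?_⟩
          intro Q hQ
          have := hAsw Q hQ
          simp at this
          omega
      · have hko := keyOut h (P := (P.1, P.2+1)) (by simp; try omega) (by simp; try omega)
          (by simp; try omega) (by simp; try omega) hEC
        have hbeE : be C (P.1, P.2+1) ≤ u - 1 - r := by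
          rw [← hbe]; exact be_mono (by simp) (by simp; try omega)
        obtain ⟨A, hAC, hA, hAcard, hAsw⟩ := al_spec C (P.1, P.2+1)
        obtain ⟨A', hA'A, hA'card⟩ := Finset.exists_subset_card_eq (s := A) (n := r + 1) (by omega)
        refine Or.inr ⟨A', hA'A.trans hAC, diag_subset hA'A hA, hA'card, ?_⟩
        intro Q hQ
        have := hAsw Q (hA'A hQ)
        simp at this
        omega
    rcases hEana with hE | ⟨A, hAC, hA, hAcard, hAbd⟩
    · exact Or.inl hE
    have ha2 : 2 ≤ P.1 := by
      by_contra hcc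
      have hAne : A.Nonempty := Finset.card_pos.mp (by omega)
      obtain ⟨Q0, hQ0⟩ := hAne
      have := (h.hC Q0 (hAC hQ0)).1
      have := (hAbd Q0 hQ0).1
      omega
    rcases hNana ha2 with hN | ⟨B, hBC, hB, hBcard, hBbd⟩
    · exact Or.inr hN
    -- contradiction : chain of size u+1
    exfalso
    have hun2 := chain_union hA hB (by
      intro x hx y hy
      have h1 := hAbd x hx
      have h2 := hBbd y hy
      omega)
    have := h.hchain (A ∪ B) (Finset.union_subset hAC hBC) hun2.1
    rw [hun2.2, hAcard, hBcard] at this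
    omega
  · -- b = n
    have hbn : P.2 = (n:ℤ) := by omega
    have hbe0 : be C P = 0 := by
      have := be_le_snd' h (a := P.1) (b := P.2) (by omega)
      omega
    have hru : r = u - 1 := by omega
    have ha2 : 2 ≤ P.1 := by
      by_contra hcc
      apply hne'
      constructor <;> omega
    rcases hNana ha2 with hN | ⟨B, hBC, hB, hBcard, hBbd⟩
    · exact Or.inr hN
    exfalso
    have hBne : B.Nonempty := Finset.card_pos.mp (by omega)
    obtain ⟨Q0, hQ0⟩ := hBne
    have := (h.hC Q0 (hBC hQ0)).2.2.2
    have := (hBbd Q0 hQ0).2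
    omega
noncomputable def nxt (C : Finset (ℤ×ℤ)) (u r : ℕ) (P : ℤ×ℤ) : ℤ×ℤ :=
  if HSet C u r (P.1, P.2+1) then (P.1, P.2+1) else (P.1-1, P.2)

noncomputable def wk (m u r : ℕ) (C : Finset (ℤ×ℤ)) (k : ℕ) : ℤ×ℤ :=
  (nxt C u r)^[k] ((m:ℤ)-(u:ℤ)+r+1, (r:ℤ)+1)

lemma wk_inv (h : Good m n u C) {r : ℕ} (hr : r + 1 ≤ u) :
    ∀ k, k ≤ m + n - 2*u → HSet C u r (wk m u r C k) ∧
      (wk m u r C k).1 - (wk m u r C k).2 = (m:ℤ) - (u:ℤ) - k := by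
  have hum := h.hum; have hun := h.hun
  intro k
  induction k with
  | zero =>
    intro _
    obtain ⟨h1, h2, h3⟩ := startpt h hr
    exact ⟨⟨h1, h2, h3⟩, by simp [wk]⟩
  | succ k ih =>
    intro hk
    obtain ⟨hH, hnu⟩ := ih (by omega)
    set P := wk m u r C k with hPdef
    have hne : P ≠ ((r:ℤ)+1, (n:ℤ)-(u:ℤ)+r+1) := by
      intro hcc
      rw [hcc] at hnu
      simp at hnu
      omega
    have hstep := succ_lemma h hr hH hne
    have hit : wk m u r C (k+1) = nxt C u r P := by
      rw [hPdef, wk, wk, Function.iterate_succ_apply']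
    by_cases hE : HSet C u r (P.1, P.2+1)
    · rw [hit, nxt, if_pos hE]
      refine ⟨hE, ?_⟩
      simp
      omega
    · rw [hit, nxt, if_neg hE]
      rcases hstep with hE' | hN
      · exact absurd hE' hE
      refine ⟨hN, ?_⟩
      simp
      omega

lemma hset_inj (h : Good m n u C) {r : ℕ} {X Y : ℤ×ℤ} (hX : HSet C u r X)
    (hY : HSet C u r Y) (hnu : X.1 - X.2 = Y.1 - Y.2) : X = Y := by
  by_contra hne
  have h1 : X.1 ≠ Y.1 := by
    intro hcc
    exact hne (Prod.ext_iff.mpr ⟨hcc, by omega⟩)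
  rcases lt_or_gt_of_ne h1 with h' | h'
  · have := al_gt (C := C) (Q := Y) hX.1 h' (by omega)
    rw [hX.2.1, hY.2.1] at this
    omega
  · have := al_gt (C := C) (Q := X) hY.1 h' (by omega)
    rw [hX.2.1, hY.2.1] at this
    omega

lemma wk_last (h : Good m n u C) {r : ℕ} (hr : r + 1 ≤ u) :
    wk m u r C (m + n - 2*u) = ((r:ℤ)+1, (n:ℤ)-(u:ℤ)+r+1) := by
  have hum := h.hum; have hun := h.hun
  obtain ⟨hH, hnu⟩ := wk_inv h hr (m + n - 2*u) le_rfl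
  obtain ⟨h1, h2, h3⟩ := endpt h hr
  exact hset_inj h hH ⟨h1, h2, h3⟩ (by push_cast at hnu ⊢; simp; omega)

lemma hset_complete (h : Good m n u C) {r : ℕ} (hr : r + 1 ≤ u) {X : ℤ×ℤ}
    (hX : HSet C u r X) : ∃ k ≤ m + n - 2*u, wk m u r C k = X := by
  have hum := h.hum; have hun := h.hun
  obtain ⟨hb1, hb2, hb3, hb4⟩ := box h hX.1 hX.2.1
  rw [hX.2.2] at hb3 hb4
  have hnurange : (u:ℤ) - n ≤ X.1 - X.2 ∧ X.1 - X.2 ≤ (m:ℤ) - u := by omega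
  set k : ℕ := ((m:ℤ) - u - (X.1 - X.2)).toNat with hkdef
  have hk : k ≤ m + n - 2*u := by omega
  obtain ⟨hH, hnu⟩ := wk_inv h hr k hk
  exact ⟨k, hk, hset_inj h hH hX (by omega)⟩
noncomputable def HL (m n u r : ℕ) (C : Finset (ℤ×ℤ)) : List (ℤ×ℤ) :=
  (List.range (m+n-2*u+1)).map (wk m u r C)

lemma HL_ne_nil : HL m n u r C ≠ [] := by
  simp [HL, List.range_succ]

lemma HL_chain' : (HL m n u r C).Chain' (fun A B => B = (A.1, A.2 + 1) ∨ B = (A.1 - 1, A.2)) := by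
  rw [HL]; show List.IsChain _ _; rw [List.isChain_map]
  rw [show m+n-2*u+1 = (m+n-2*u)+1 from rfl, List.isChain_range_succ]
  intro k hk
  have hit : wk m u r C (k+1) = nxt C u r (wk m u r C k) := by
    rw [wk, wk, Function.iterate_succ_apply']
  rw [hit, nxt]
  by_cases hE : HSet C u r ((wk m u r C k).1, (wk m u r C k).2+1)
  · rw [if_pos hE]; exact Or.inl rfl
  · rw [if_neg hE]; exact Or.inr rfl

lemma HL_head : (HL m n u r C).head? = some ((m:ℤ)-(u:ℤ)+r+1, (r:ℤ)+1) := by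
  rw [HL, show m+n-2*u+1 = (m+n-2*u)+1 from rfl, List.range_succ_eq_map]
  simp [wk]

lemma HL_last (h : Good m n u C) (hr : r + 1 ≤ u) :
    (HL m n u r C).getLast? = some ((r:ℤ)+1, (n:ℤ)-(u:ℤ)+r+1) := by
  rw [HL, show m+n-2*u+1 = (m+n-2*u)+1 from rfl, List.range_succ, List.map_append]
  simp [List.getLast?_concat]
  exact wk_last h hr

lemma mem_HL (h : Good m n u C) (hr : r + 1 ≤ u) {x : ℤ×ℤ} :
    x ∈ HL m n u r C ↔ HSet C u r x := by
  constructor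
  · intro hx
    rw [HL, List.mem_map] at hx
    obtain ⟨k, hk, rfl⟩ := hx
    rw [List.mem_range] at hk
    exact (wk_inv h hr k (by omega)).1
  · intro hx
    obtain ⟨k, hk, hwk⟩ := hset_complete h hr hx
    rw [HL, List.mem_map]
    exact ⟨k, List.mem_range.mpr (by omega), hwk⟩

lemma HL_nodup (h : Good m n u C) (hr : r + 1 ≤ u) : (HL m n u r C).Nodup := by
  rw [HL]
  refine List.Nodup.map_on ?_ List.nodup_range
  intro x hx y hy hxy
  rw [List.mem_range] at hx hy
  have h1 := (wk_inv h hr x (by omega)).2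
  have h2 := (wk_inv h hr y (by omega)).2
  rw [hxy] at h1
  omega

lemma HL_length : (HL m n u r C).length = m+n-2*u+1 := by simp [HL]

lemma HL_card (h : Good m n u C) (hr : r + 1 ≤ u) :
    (HL m n u r C).toFinset.card = m+n-2*u+1 := by
  rw [List.card_toFinset, (HL_nodup h hr).dedup]
  exact HL_length
noncomputable def T1f (m n u : ℕ) : Finset (ℤ×ℤ) :=
  ((Finset.Icc (1:ℤ) (m:ℤ)) ×ˢ (Finset.Icc (1:ℤ) (n:ℤ))).filter
    (fun P => P.2 ≤ P.1 - ((m:ℤ)-(u:ℤ)) - 1)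

noncomputable def T2f (m n u : ℕ) : Finset (ℤ×ℤ) :=
  ((Finset.Icc (1:ℤ) (m:ℤ)) ×ˢ (Finset.Icc (1:ℤ) (n:ℤ))).filter
    (fun P => P.1 ≤ P.2 - ((n:ℤ)-(u:ℤ)) - 1)

lemma T1f_card (hum : u ≤ m) (hun : u ≤ n) :
    (T1f m n u).card = ∑ k ∈ Finset.range u, k := by
  have : T1f m n u = (Finset.range u).biUnion
      (fun k => (Finset.Icc (1:ℤ) (k:ℤ)).image (fun l => ((m:ℤ)-(u:ℤ)+k+1, l))) := by
    ext x
    simp only [T1f, Finset.mem_filter, Finset.mem_product, Finset.mem_Icc, Finset.mem_biUnion,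
      Finset.mem_range, Finset.mem_image]
    constructor
    · rintro ⟨⟨⟨ha1, ha2⟩, hb1, hb2⟩, ht⟩
      refine ⟨(x.1 - (m:ℤ) + u - 1).toNat, by omega, x.2, by omega, ?_⟩
      rw [Prod.ext_iff]
      constructor <;> simp <;> omega
    · rintro ⟨k, hk, l, hl, rfl⟩
      simp only [Finset.mem_Icc] at hl ⊢
      refine ⟨⟨⟨by omega, by omega⟩, by omega, by omega⟩, by omega⟩
  rw [this, Finset.card_biUnion]
  · apply Finset.sum_congr rfl
    intro k _
    rw [Finset.card_image_of_injective _ (fun a b hab => by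
      simpa using congrArg Prod.snd hab)]
    rw [Int.card_Icc]
    omega
  · intro k _ k' _ hkk'
    rw [Function.onFun, Finset.disjoint_left]
    intro x hx hx'
    simp only [Finset.mem_image] at hx hx'
    obtain ⟨l, _, rfl⟩ := hx
    obtain ⟨l', _, h2⟩ := hx'
    apply hkk'
    have := congrArg Prod.fst h2
    simp at this
    omega

lemma T2f_card (hum : u ≤ m) (hun : u ≤ n) :
    (T2f m n u).card = ∑ k ∈ Finset.range u, k := by
  have : T2f m n u = (Finset.range u).biUnion
      (fun k => (Finset.Icc (1:ℤ) (k:ℤ)).image (fun l => (l, (n:ℤ)-(u:ℤ)+k+1))) := by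
    ext x
    simp only [T2f, Finset.mem_filter, Finset.mem_product, Finset.mem_Icc, Finset.mem_biUnion,
      Finset.mem_range, Finset.mem_image]
    constructor
    · rintro ⟨⟨⟨ha1, ha2⟩, hb1, hb2⟩, ht⟩
      refine ⟨(x.2 - (n:ℤ) + u - 1).toNat, by omega, x.1, by omega, ?_⟩
      rw [Prod.ext_iff]
      constructor <;> simp <;> omega
    · rintro ⟨k, hk, l, hl, rfl⟩
      simp only [Finset.mem_Icc] at hl ⊢
      refine ⟨⟨⟨by omega, by omega⟩, by omega, by omega⟩, by omega⟩
  rw [this, Finset.card_biUnion]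
  · apply Finset.sum_congr rfl
    intro k _
    rw [Finset.card_image_of_injective _ (fun a b hab => by
      simpa using congrArg Prod.fst hab)]
    rw [Int.card_Icc]
    omega
  · intro k _ k' _ hkk'
    rw [Function.onFun, Finset.disjoint_left]
    intro x hx hx'
    simp only [Finset.mem_image] at hx hx'
    obtain ⟨l, _, rfl⟩ := hx
    obtain ⟨l', _, h2⟩ := hx'
    apply hkk'
    have := congrArg Prod.snd h2
    simp at this
    omega
lemma hset_not_tri1 (h : Good m n u C) {r : ℕ} (hr : r + 1 ≤ u) {x : ℤ×ℤ}
    (hx : HSet C u r x) (ht : x ∈ T1f m n u) : False := by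
  obtain ⟨hxC, hal, hbe⟩ := hx
  rw [T1f, Finset.mem_filter, Finset.mem_product, Finset.mem_Icc, Finset.mem_Icc] at ht
  obtain ⟨⟨⟨h1, h2⟩, h3, h4⟩, h5⟩ := ht
  have b1 : (al C x : ℤ) ≤ x.2 - 1 := by
    have := al_le_snd' h (a := x.1) (b := x.2) h3; simpa using this
  have b2 : (be C x : ℤ) ≤ (m:ℤ) - x.1 := by
    have := be_le_fst' h (a := x.1) (b := x.2) h2; simpa using this
  omega

lemma hset_not_tri2 (h : Good m n u C) {r : ℕ} (hr : r + 1 ≤ u) {x : ℤ×ℤ}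
    (hx : HSet C u r x) (ht : x ∈ T2f m n u) : False := by
  obtain ⟨hxC, hal, hbe⟩ := hx
  rw [T2f, Finset.mem_filter, Finset.mem_product, Finset.mem_Icc, Finset.mem_Icc] at ht
  obtain ⟨⟨⟨h1, h2⟩, h3, h4⟩, h5⟩ := ht
  have b1 : (al C x : ℤ) ≤ x.1 - 1 := by
    have := al_le_fst' h (a := x.1) (b := x.2) h1; simpa using this
  have b2 : (be C x : ℤ) ≤ (n:ℤ) - x.2 := by
    have := be_le_snd' h (a := x.1) (b := x.2) h4; simpa using this
  omega

lemma C_eq (h : Good m n u C) :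
    C = ((Finset.range u).biUnion (fun r => (HL m n u r C).toFinset)) ∪ T1f m n u ∪ T2f m n u := by
  ext x
  simp only [Finset.mem_union, Finset.mem_biUnion, Finset.mem_range, List.mem_toFinset]
  constructor
  · intro hx
    obtain ⟨h1, h2, h3, h4⟩ := h.hC x hx
    have hin := keyIn h hx
    by_cases htight : al C x + be C x + 1 = u
    · refine Or.inl (Or.inl ⟨al C x, by omega, ?_⟩)
      rw [mem_HL h (by omega)]
      exact ⟨hx, rfl, by omega⟩
    · have hs : al C x + be C x + 2 ≤ u := by omega
      rcases nontight h (((m:ℤ) - x.1) + ((n:ℤ) - x.2)).toNat x hx (by omega) hs with h' | h'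
      · refine Or.inl (Or.inr ?_)
        rw [T1f, Finset.mem_filter, Finset.mem_product, Finset.mem_Icc, Finset.mem_Icc]
        exact ⟨⟨⟨h1, h2⟩, h3, h4⟩, by omega⟩
      · refine Or.inr ?_
        rw [T2f, Finset.mem_filter, Finset.mem_product, Finset.mem_Icc, Finset.mem_Icc]
        exact ⟨⟨⟨h1, h2⟩, h3, h4⟩, by omega⟩
  · rintro ((⟨r, hr, hx⟩ | hx) | hx)
    · exact ((mem_HL h (by omega)).mp hx).1
    · rw [T1f, Finset.mem_filter, Finset.mem_product, Finset.mem_Icc, Finset.mem_Icc] at hx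
      exact triangle1_mem h hx.1.1.1 hx.1.1.2 hx.1.2.1 hx.1.2.2 (by omega)
    · rw [T2f, Finset.mem_filter, Finset.mem_product, Finset.mem_Icc, Finset.mem_Icc] at hx
      exact triangle2_mem h hx.1.1.1 hx.1.1.2 hx.1.2.1 hx.1.2.2 (by omega)

lemma C_card (h : Good m n u C) :
    C.card = u * (m + n - 2*u + 1) + (∑ k ∈ Finset.range u, k) + (∑ k ∈ Finset.range u, k) := by
  rw [C_eq h]
  have hd1 : Disjoint ((Finset.range u).biUnion (fun r => (HL m n u r C).toFinset) ∪ T1f m n u)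
      (T2f m n u) := by
    rw [Finset.disjoint_left]
    intro x hx hx2
    rcases Finset.mem_union.mp hx with hx | hx1
    · obtain ⟨r, hr, hxl⟩ := Finset.mem_biUnion.mp hx
      rw [Finset.mem_range] at hr
      exact hset_not_tri2 h (by omega) ((mem_HL h (by omega)).mp (List.mem_toFinset.mp hxl)) hx2
    · rw [T1f, Finset.mem_filter] at hx1
      rw [T2f, Finset.mem_filter] at hx2
      have hum := h.hum; have hun := h.hun
      have := hx1.2; have := hx2.2
      omega
  have hd2 : Disjoint ((Finset.range u).biUnion (fun r => (HL m n u r C).toFinset)) (T1f m n u) := by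
    rw [Finset.disjoint_left]
    intro x hx hx1
    obtain ⟨r, hr, hxl⟩ := Finset.mem_biUnion.mp hx
    rw [Finset.mem_range] at hr
    exact hset_not_tri1 h (by omega) ((mem_HL h (by omega)).mp (List.mem_toFinset.mp hxl)) hx1
  rw [Finset.card_union_of_disjoint hd1, Finset.card_union_of_disjoint hd2]
  have hbu : ((Finset.range u).biUnion (fun r => (HL m n u r C).toFinset)).card
      = u * (m + n - 2*u + 1) := by
    rw [Finset.card_biUnion]
    · rw [Finset.sum_congr rfl (fun r hr => HL_card h (by
        rw [Finset.mem_range] at hr; omega))]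
      simp [Finset.sum_const, mul_comm]
    · intro r hr r' hr' hrr'
      rw [Function.onFun, Finset.disjoint_left]
      intro x hx hx'
      rw [List.mem_toFinset, mem_HL h (by rw [Finset.mem_coe, Finset.mem_range] at hr; omega)] at hx
      rw [List.mem_toFinset, mem_HL h (by rw [Finset.mem_coe, Finset.mem_range] at hr'; omega)] at hx'
      exact hrr' (hx.2.1 ▸ hx'.2.1)
  rw [hbu, T1f_card h.hum h.hun, T2f_card h.hum h.hun]
end S9

/-- A maximal subset of the grid [1,m]×[1,n] with no diagonal chain of size u+1 is the
union of u vertex-disjoint lattice paths from (m-u+i,i) to (i,n-u+i), i = 1,…,u, and the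
two corner triangles; in particular it has u(m-u)+u(n-u)+u² points. -/
theorem stmt9 (m n u : ℕ) (hu : 0 < u) (hum : u ≤ m) (hun : u ≤ n)
    (C : Finset (ℤ × ℤ))
    (hC : ∀ P ∈ C, 1 ≤ P.1 ∧ P.1 ≤ (m : ℤ) ∧ 1 ≤ P.2 ∧ P.2 ≤ (n : ℤ))
    (hchain : ∀ D : Finset (ℤ × ℤ), D ⊆ C → IsDiagChain D → D.card ≤ u)
    (hmax : ∀ P : ℤ × ℤ, 1 ≤ P.1 → P.1 ≤ (m : ℤ) → 1 ≤ P.2 → P.2 ≤ (n : ℤ) → P ∉ C →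
      ∃ D : Finset (ℤ × ℤ), D ⊆ insert P C ∧ IsDiagChain D ∧ D.card = u + 1) :
    (∃ H : Fin u → List (ℤ × ℤ),
      (∀ p, IsLatticePath (H p)) ∧
      (∀ p : Fin u, (H p).head? =
        some ((m : ℤ) - (u : ℤ) + ((p : ℕ) : ℤ) + 1, ((p : ℕ) : ℤ) + 1)) ∧
      (∀ p : Fin u, (H p).getLast? =
        some (((p : ℕ) : ℤ) + 1, (n : ℤ) - (u : ℤ) + ((p : ℕ) : ℤ) + 1)) ∧
      (∀ p q : Fin u, p ≠ q → ∀ x ∈ H p, x ∉ H q) ∧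
      (↑C = ({P : ℤ × ℤ | ∃ p, P ∈ H p} ∪
        {P : ℤ × ℤ | 1 ≤ P.1 ∧ P.1 ≤ (m : ℤ) ∧ 1 ≤ P.2 ∧ P.2 ≤ (n : ℤ) ∧
          P.2 ≤ P.1 - ((m : ℤ) - u)} ∪
        {P : ℤ × ℤ | 1 ≤ P.1 ∧ P.1 ≤ (m : ℤ) ∧ 1 ≤ P.2 ∧ P.2 ≤ (n : ℤ) ∧
          P.1 ≤ P.2 - ((n : ℤ) - u)}))) ∧
    C.card = u * (m - u) + u * (n - u) + u * u := by
  have hG : S9.Good m n u C := ⟨hu, hum, hun, hC, hchain, hmax⟩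
  constructor
  · refine ⟨fun p => S9.HL m n u (p : ℕ) C, ?_, ?_, ?_, ?_, ?_⟩
    · exact fun p => ⟨S9.HL_ne_nil, S9.HL_chain'⟩
    · exact fun p => S9.HL_head
    · exact fun p => S9.HL_last hG p.isLt
    · intro p q hpq x hxp hxq
      have h1 := (S9.mem_HL hG p.isLt).mp hxp
      have h2 := (S9.mem_HL hG q.isLt).mp hxq
      exact hpq (Fin.ext (h1.2.1 ▸ h2.2.1))
    · ext x
      simp only [Set.mem_union, Set.mem_setOf_eq, Finset.mem_coe]
      constructor
      · intro hx
        obtain ⟨h1, h2, h3, h4⟩ := hC x hx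
        have hin := S9.keyIn hG hx
        by_cases htight : S9.al C x + S9.be C x + 1 = u
        · refine Or.inl (Or.inl ⟨⟨S9.al C x, by omega⟩, ?_⟩)
          rw [S9.mem_HL hG (by simp; omega)]
          exact ⟨hx, rfl, by simp; omega⟩
        · have hs : S9.al C x + S9.be C x + 2 ≤ u := by omega
          rcases S9.nontight hG (((m:ℤ) - x.1) + ((n:ℤ) - x.2)).toNat x hx (by omega) hs
            with h' | h'
          · exact Or.inl (Or.inr ⟨h1, h2, h3, h4, by omega⟩)
          · exact Or.inr ⟨h1, h2, h3, h4, by omega⟩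
      · rintro ((⟨p, hp⟩ | ht) | ht)
        · exact ((S9.mem_HL hG p.isLt).mp hp).1
        · exact S9.triangle1_mem hG ht.1 ht.2.1 ht.2.2.1 ht.2.2.2.1 ht.2.2.2.2
        · exact S9.triangle2_mem hG ht.1 ht.2.1 ht.2.2.1 ht.2.2.2.1 ht.2.2.2.2
  · rw [S9.C_card hG]
    have hgauss := Finset.sum_range_id_mul_two u
    have h2u : 2*u ≤ m + n := by omega
    have hu1 : 1 ≤ u := hu
    zify [hum, hun, h2u, hu1]
    zify [hu1] at hgauss
    linear_combination hgauss
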